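/- Fix α ∈ [0,1) and s ∈ S with S_min < s < S_max, and let s' be the smallest element of S greater than s. Let 𝑺 = (s,…,s) be the constant n-tuple. Then S_min·(1−α)^{1/n} + s·(1 − (1−α)^{1/n}) ≤ B_{T_h}^*(𝑺) ≤ S_min·(1−α)^{1/n} + s'·(1 − (1−α)^{1/n}), where by the characterization of T_h the upper set is Ω(𝑺, T_h) = {y ∈ Ω : y = 𝑺 or s < y_n} (y_n the largest entry of y). -/

import Mathlib

noncomputable section

/-- Distributions on the finite support `S`, viewed as points of the probability
simplex inside `EuclideanSpace ℝ S` (Euclidean metric). -/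
def distSet (S : Finset ℝ) : Set (EuclideanSpace ℝ ↥S) :=
  {F | (∀ s, 0 ≤ F s) ∧ ∑ s, F s = 1}

/-- Mean of a distribution on `S`. -/
def distMean (S : Finset ℝ) (F : EuclideanSpace ℝ ↥S) : ℝ :=
  ∑ s : ↥S, F s * (s : ℝ)

open Classical in
/-- `P_F[A]`: probability of a set `A` of `n`-tuples under `n` i.i.d. draws from `F`. -/
def probOf (S : Finset ℝ) (n : ℕ) (F : EuclideanSpace ℝ ↥S)
    (A : Set (Fin n → ↥S)) : ℝ :=
  ∑ y : Fin n → ↥S, if y ∈ A then ∏ i, F (y i) else 0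

/-- The interior likely set `𝒢(A, α)`. -/
def intLikely (S : Finset ℝ) (n : ℕ) (A : Set (Fin n → ↥S)) (α : ℝ) :
    Set (EuclideanSpace ℝ ↥S) :=
  {F | F ∈ distSet S ∧ α < probOf S n F A}

/-- The likely set `𝒻(A, α)`: the closure of `𝒢(A, α)`. -/
def likely (S : Finset ℝ) (n : ℕ) (A : Set (Fin n → ↥S)) (α : ℝ) :
    Set (EuclideanSpace ℝ ↥S) :=
  closure (intLikely S n A α)

/-- `Ω`: the set of nondecreasing (`sorted`) `n`-tuples over `S`. -/
def sortedTuples (S : Finset ℝ) (n : ℕ) : Set (Fin n → ↥S) :=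
  {x | Monotone x}

/-- The sorted version of a tuple. -/
def sortTup (S : Finset ℝ) (n : ℕ) (y : Fin n → ↥S) : Fin n → ↥S :=
  y ∘ Tuple.sort y

/-- Probability of a set `A ⊆ Ω` of sorted tuples, identifying tuples with
their sorted versions. -/
def probSorted (S : Finset ℝ) (n : ℕ) (F : EuclideanSpace ℝ ↥S)
    (A : Set (Fin n → ↥S)) : ℝ :=
  probOf S n F {y | sortTup S n y ∈ A}

/-- Interior likely set for a set of sorted tuples. -/
def intLikelySorted (S : Finset ℝ) (n : ℕ) (A : Set (Fin n → ↥S)) (α : ℝ) :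
    Set (EuclideanSpace ℝ ↥S) :=
  {F | F ∈ distSet S ∧ α < probSorted S n F A}

/-- Likely set for a set of sorted tuples. -/
def likelySorted (S : Finset ℝ) (n : ℕ) (A : Set (Fin n → ↥S)) (α : ℝ) :
    Set (EuclideanSpace ℝ ↥S) :=
  closure (intLikelySorted S n A α)

/-- Upper set `Ω(x, R)` of `x` under a relation `R` on `Ω`. -/
def upperSet (S : Finset ℝ) (n : ℕ) (r : (Fin n → ↥S) → (Fin n → ↥S) → Prop)
    (x : Fin n → ↥S) : Set (Fin n → ↥S) :=
  {y ∈ sortedTuples S n | r x y}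

/-- Pessimal bound `B_R^*(x) = inf {E[F] : F ∈ 𝒻(Ω(x,R), α)}`. -/
def pessimal (S : Finset ℝ) (n : ℕ) (r : (Fin n → ↥S) → (Fin n → ↥S) → Prop)
    (α : ℝ) (x : Fin n → ↥S) : ℝ :=
  sInf (distMean S '' likelySorted S n (upperSet S n r x) α)

/-- Low lexicographic order: `x ≤_{T_ℓ} y` iff `x = y` or `x i < y i` at the
smallest index `i` where `x` and `y` differ. -/
def lexLowLE {n : ℕ} {α : Type*} [LinearOrder α] (x y : Fin n → α) : Prop :=
  x = y ∨ ∃ i, x i < y i ∧ ∀ j, j < i → x j = y j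

/-- High lexicographic order: `x ≤_{T_h} y` iff `x = y` or `x i < y i` at the
largest index `i` where `x` and `y` differ. -/
def lexHighLE {n : ℕ} {α : Type*} [LinearOrder α] (x y : Fin n → α) : Prop :=
  x = y ∨ ∃ i, x i < y i ∧ ∀ j, i < j → x j = y j

open Classical in
lemma sumIfAll_aux (S : Finset ℝ) (n : ℕ) (g : ↥S → ℝ) (B : ↥S → Prop) :
    (∑ y : Fin n → ↥S, if ∀ i, B (y i) then ∏ i, g (y i) else 0)
      = (∑ t, if B t then g t else 0) ^ n := by
  have h1 : ((∑ t, if B t then g t else 0) ^ n)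
      = ∏ _i : Fin n, (∑ t : ↥S, if B t then g t else 0) := by
    simp
  rw [h1, Finset.prod_univ_sum, Fintype.piFinset_univ]
  refine Finset.sum_congr rfl fun y _ => ?_
  by_cases h : ∀ i, B (y i)
  · rw [if_pos h]
    exact Finset.prod_congr rfl fun i _ => by rw [if_pos (h i)]
  · rw [if_neg h]
    push_neg at h
    obtain ⟨i, hi⟩ := h
    exact (Finset.prod_eq_zero (Finset.mem_univ i) (by rw [if_neg hi])).symm

lemma mem_upper_const_iff (S : Finset ℝ) (n : ℕ) (hn : 1 ≤ n) (s : ↥S)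
    (y : Fin n → ↥S) :
    sortTup S n y ∈ upperSet S n lexHighLE (fun _ => s) ↔
      (∀ i, y i = s) ∨ (∃ i, s < y i) := by
  have hmono : Monotone (sortTup S n y) := Tuple.monotone_sort y
  have hval : ∀ j, y j = sortTup S n y ((Tuple.sort y).symm j) := by
    intro j
    simp [sortTup]
  constructor
  · rintro ⟨-, h | ⟨i, hi, -⟩⟩
    · left; intro j; rw [hval j, ← h]
    · right; exact ⟨Tuple.sort y i, hi⟩
  · intro h
    refine ⟨hmono, ?_⟩
    rcases h with h | ⟨j, hj⟩
    · left
      funext i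
      exact (h (Tuple.sort y i)).symm
    · right
      have hL : ∀ i : Fin n, i ≤ (⟨n - 1, by omega⟩ : Fin n) := by
        intro i
        have := i.isLt
        rw [Fin.le_def]
        simp only []
        omega
      refine ⟨⟨n - 1, by omega⟩, ?_, ?_⟩
      · calc (s : ↥S) < y j := hj
          _ = sortTup S n y ((Tuple.sort y).symm j) := hval j
          _ ≤ _ := hmono (hL _)
      · intro k hk
        have := k.isLt
        rw [Fin.lt_def] at hk
        simp only [] at hk
        omega

open Classical in
lemma prob_const_eq (S : Finset ℝ) (n : ℕ) (hn : 1 ≤ n) (s : ↥S)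
    (F : EuclideanSpace ℝ ↥S) :
    probSorted S n F (upperSet S n lexHighLE (fun _ => s)) =
      F s ^ n + ((∑ t, F t) ^ n - (∑ t, if t ≤ s then F t else 0) ^ n) := by
  have key : ∀ y : Fin n → ↥S,
      (if sortTup S n y ∈ upperSet S n lexHighLE (fun _ => s) then ∏ i, F (y i) else 0)
        = (if ∀ i, y i = s then ∏ i, F (y i) else 0)
          + ((∏ i, F (y i))
             - (if ∀ i, y i ≤ s then ∏ i, F (y i) else 0)) := by
    intro y
    by_cases h1 : ∀ i, y i = s
    · have h2 : ∀ i, y i ≤ s := fun i => le_of_eq (h1 i)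
      rw [if_pos ((mem_upper_const_iff S n hn s y).2 (Or.inl h1)), if_pos h1, if_pos h2]
      ring
    · by_cases h3 : ∃ i, s < y i
      · have h2 : ¬ ∀ i, y i ≤ s := by
          obtain ⟨i, hi⟩ := h3
          exact fun h => absurd (h i) (not_le.2 hi)
        rw [if_pos ((mem_upper_const_iff S n hn s y).2 (Or.inr h3)), if_neg h1, if_neg h2]
        ring
      · have h2 : ∀ i, y i ≤ s := by
          push_neg at h3
          exact h3
        rw [if_neg (fun h => ((mem_upper_const_iff S n hn s y).1 h).elim h1 h3), if_neg h1,
          if_pos h2]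
        ring
  have e1 : (∑ y : Fin n → ↥S, if ∀ i, y i = s then ∏ i, F (y i) else 0)
      = (∑ t, if t = s then F t else 0) ^ n := by
    have h := sumIfAll_aux S n (fun t => F t) (fun t => t = s)
    convert h using 2 <;> congr!
  have e2 : (∑ y : Fin n → ↥S, ∏ i, F (y i)) = (∑ t, F t) ^ n := by
    have h := sumIfAll_aux S n (fun t => F t) (fun _ => True)
    simpa using h
  have e3 : (∑ y : Fin n → ↥S, if ∀ i, y i ≤ s then ∏ i, F (y i) else 0)
      = (∑ t, if t ≤ s then F t else 0) ^ n := by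
    have h := sumIfAll_aux S n (fun t => F t) (fun t => t ≤ s)
    convert h using 2 <;> congr!
  unfold probSorted probOf
  simp only [Set.mem_setOf_eq]
  rw [Finset.sum_congr rfl fun y _ => key y, Finset.sum_add_distrib, Finset.sum_sub_distrib,
    e1, e2, e3]
  congr 2
  simp

/-- bounds on the pessimal bound for the high lexicographic order
at a homogeneous sample `𝑺 = (s,…,s)` with `S_min < s < S_max`, where `s'` is
the smallest element of `S` greater than `s`:
`S_min (1-α)^{1/n} + s (1 - (1-α)^{1/n}) ≤ B_{T_h}^*(𝑺)
  ≤ S_min (1-α)^{1/n} + s' (1 - (1-α)^{1/n})`. -/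
theorem stmt15 (S : Finset ℝ) (hS : S.Nonempty) (n : ℕ) (hn : 1 ≤ n)
    (α : ℝ) (hα0 : 0 ≤ α) (hα1 : α < 1)
    (s : ↥S) (hsmin : S.min' hS < (s : ℝ)) (hsmax : (s : ℝ) < S.max' hS)
    (s' : ↥S) (hs' : IsLeast {t : ↥S | s < t} s') :
    S.min' hS * (1 - α) ^ ((1 : ℝ) / n) + (s : ℝ) * (1 - (1 - α) ^ ((1 : ℝ) / n)) ≤
        pessimal S n lexHighLE α (fun _ => s) ∧
      pessimal S n lexHighLE α (fun _ => s) ≤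
        S.min' hS * (1 - α) ^ ((1 : ℝ) / n) + (s' : ℝ) * (1 - (1 - α) ^ ((1 : ℝ) / n)) := by
  classical
  have hn0 : (n : ℝ) ≠ 0 := Nat.cast_ne_zero.2 (by omega)
  have h1α : 0 < 1 - α := by linarith
  set β : ℝ := (1 - α) ^ ((1 : ℝ) / n) with hβdef
  have hβpos : 0 < β := Real.rpow_pos_of_pos h1α _
  have hβ1 : β ≤ 1 := Real.rpow_le_one h1α.le (by linarith) (by positivity)
  have hβn : β ^ n = 1 - α := by
    rw [hβdef, ← Real.rpow_natCast ((1 - α) ^ ((1 : ℝ) / n)) n, ← Real.rpow_mul h1α.le,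
      one_div, inv_mul_cancel₀ hn0, Real.rpow_one]
  set m : ↥S := ⟨S.min' hS, S.min'_mem hS⟩ with hm
  have hms : m < s := Subtype.coe_lt_coe.1 hsmin
  have hss' : s < s' := hs'.1
  have hs's : (s : ℝ) < (s' : ℝ) := Subtype.coe_lt_coe.2 hss'
  have hmins' : S.min' hS < (s' : ℝ) := lt_trans hsmin hs's
  have hsm : s ≠ m := ne_of_gt hms
  have hss'ne : s ≠ s' := ne_of_lt hss'
  have hms'ne : m ≠ s' := ne_of_lt (lt_trans hms hss')
  set A := upperSet S n lexHighLE (fun _ => s) with hA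
  set L : ℝ := S.min' hS * β + (s : ℝ) * (1 - β) with hL
  have hlow : ∀ F ∈ intLikelySorted S n A α, L ≤ distMean S F := by
    rintro F ⟨⟨hF0, hF1⟩, hFp⟩
    set r : ℝ := ∑ t : ↥S, if t < s then F t else 0 with hr
    have hr0 : 0 ≤ r := Finset.sum_nonneg fun t _ => by
      split_ifs
      exacts [hF0 t, le_rfl]
    have hq0 : 0 ≤ F s := hF0 s
    have hw : (∑ t : ↥S, if t ≤ s then F t else 0) = F s + r := by
      have hsplit : ∀ t : ↥S, (if t ≤ s then F t else 0)
          = (if t = s then F t else 0) + (if t < s then F t else 0) := by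
        intro t
        rcases lt_trichotomy t s with h | h | h
        · rw [if_pos h.le, if_neg (ne_of_lt h), if_pos h]; ring
        · rw [if_pos h.le, if_pos h, if_neg (by simp [h])]; ring
        · rw [if_neg (not_le.2 h), if_neg (ne_of_gt h), if_neg (not_lt.2 h.le)]; ring
      rw [Finset.sum_congr rfl fun t _ => hsplit t, Finset.sum_add_distrib, ← hr]
      congr 1
      simp
    rw [hA, prob_const_eq S n hn s F, hF1, hw, one_pow] at hFp
    have hpow : F s ^ n + r ^ n ≤ (F s + r) ^ n := pow_add_pow_le hq0 hr0 (by omega)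
    have hrn : r ^ n < β ^ n := by
      rw [hβn]
      linarith
    have hrβ : r ≤ β := le_of_lt (lt_of_pow_lt_pow_left₀ n hβpos.le hrn)
    have hsum : (∑ t : ↥S, (S.min' hS * (if t < s then F t else 0)
        + (s : ℝ) * (F t - (if t < s then F t else 0))))
        = S.min' hS * r + (s : ℝ) * (1 - r) := by
      rw [Finset.sum_add_distrib, ← Finset.mul_sum, ← hr, ← Finset.mul_sum,
        Finset.sum_sub_distrib, hF1, ← hr]
    have hmean : S.min' hS * r + (s : ℝ) * (1 - r) ≤ distMean S F := by
      rw [← hsum]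
      refine Finset.sum_le_sum fun t _ => ?_
      by_cases h : t < s
      · rw [if_pos h]
        have h1 : S.min' hS ≤ (t : ℝ) := S.min'_le t t.2
        have h2 := hF0 t
        nlinarith
      · rw [if_neg h]
        have h1 : (s : ℝ) ≤ (t : ℝ) := Subtype.coe_le_coe.2 (not_lt.1 h)
        have h2 := hF0 t
        nlinarith
    have hLle : L ≤ S.min' hS * r + (s : ℝ) * (1 - r) := by
      rw [hL]
      nlinarith [mul_nonneg (sub_nonneg.2 hrβ) (sub_nonneg.2 hsmin.le)]
    linarith
  have hcont : Continuous (distMean S) := by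
    unfold distMean
    exact continuous_finset_sum _ fun t _ => (PiLp.continuous_apply (p := 2) (β := fun _ : ↥S => ℝ) (i := t)).mul continuous_const
  have hlowC : ∀ F ∈ likelySorted S n A α, L ≤ distMean S F := fun F hF =>
    closure_minimal hlow (isClosed_le continuous_const hcont) hF
  set Fe : ℝ → EuclideanSpace ℝ ↥S := fun ε => WithLp.toLp 2 fun t =>
    (if t = m then β - ε else 0) + (if t = s' then 1 - β + ε else 0) with hFe
  have hFe_s : ∀ ε, Fe ε s = 0 := by
    intro ε
    simp only [hFe, PiLp.toLp_apply]
    rw [if_neg hsm, if_neg hss'ne, add_zero]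
  have hFe_sum : ∀ ε, ∑ t : ↥S, Fe ε t = 1 := by
    intro ε
    simp only [hFe, PiLp.toLp_apply]
    rw [Finset.sum_add_distrib, Finset.sum_ite_eq' Finset.univ m fun _ => β - ε,
      Finset.sum_ite_eq' Finset.univ s' fun _ => 1 - β + ε]
    simp only [Finset.mem_univ, if_true]
    ring
  have hFe_w : ∀ ε, (∑ t : ↥S, if t ≤ s then Fe ε t else 0) = β - ε := by
    intro ε
    have hpt : ∀ t : ↥S, (if t ≤ s then Fe ε t else 0) = (if t = m then β - ε else 0) := by
      intro t
      by_cases h1 : t = m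
      · subst h1
        simp [hFe, hms'ne, hms.le]
      · rw [if_neg h1]
        by_cases h2 : t ≤ s
        · have hts' : t ≠ s' := fun h => absurd h2 (by rw [h]; exact not_le.2 hss')
          rw [if_pos h2]
          simp only [hFe, PiLp.toLp_apply]
          rw [if_neg h1, if_neg hts', add_zero]
        · rw [if_neg h2]
    rw [Finset.sum_congr rfl fun t _ => hpt t,
      Finset.sum_ite_eq' Finset.univ m fun _ => β - ε]
    simp
  have hFe_mem : ∀ ε, 0 ≤ ε → ε ≤ β → Fe ε ∈ distSet S := by
    intro ε h0 h1
    refine ⟨fun t => ?_, hFe_sum ε⟩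
    simp only [hFe, PiLp.toLp_apply]
    split_ifs <;> linarith
  have hFe_prob : ∀ ε, 0 < ε → ε ≤ β → α < probSorted S n (Fe ε) A := by
    intro ε h0 h1
    rw [hA, prob_const_eq S n hn s (Fe ε), hFe_s, hFe_sum, hFe_w]
    rw [zero_pow (by omega : n ≠ 0), one_pow]
    have hlt : (β - ε) ^ n < β ^ n := pow_lt_pow_left₀ (by linarith) (by linarith) (by omega)
    rw [hβn] at hlt
    linarith
  have hFe_mean : ∀ ε, distMean S (Fe ε)
      = S.min' hS * (β - ε) + (s' : ℝ) * (1 - β + ε) := by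
    intro ε
    have hpt : ∀ t : ↥S, Fe ε t * (t : ℝ)
        = (if t = m then (β - ε) * S.min' hS else 0)
          + (if t = s' then (1 - β + ε) * (s' : ℝ) else 0) := by
      intro t
      simp only [hFe, PiLp.toLp_apply]
      rw [add_mul]
      congr 1
      · by_cases h : t = m
        · subst h
          simp [hm]
        · rw [if_neg h, if_neg h, zero_mul]
      · by_cases h : t = s'
        · subst h
          simp
        · rw [if_neg h, if_neg h, zero_mul]
    unfold distMean
    rw [Finset.sum_congr rfl fun t _ => hpt t, Finset.sum_add_distrib,
      Finset.sum_ite_eq' Finset.univ m fun _ => (β - ε) * S.min' hS,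
      Finset.sum_ite_eq' Finset.univ s' fun _ => (1 - β + ε) * (s' : ℝ)]
    simp only [Finset.mem_univ, if_true]
    ring
  have hFe_memL : ∀ ε, 0 < ε → ε ≤ β → Fe ε ∈ likelySorted S n A α := fun ε h0 h1 =>
    subset_closure ⟨hFe_mem ε h0.le h1, hFe_prob ε h0 h1⟩
  have hbdd : BddBelow (distMean S '' likelySorted S n A α) := by
    refine ⟨L, ?_⟩
    rintro x ⟨F, hF, rfl⟩
    exact hlowC F hF
  have hne : (distMean S '' likelySorted S n A α).Nonempty :=
    ⟨distMean S (Fe β), ⟨Fe β, hFe_memL β hβpos le_rfl, rfl⟩⟩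
  have hpess : pessimal S n lexHighLE α (fun _ => s)
      = sInf (distMean S '' likelySorted S n A α) := by
    rw [pessimal, ← hA]
  constructor
  · rw [hpess]
    refine le_csInf hne ?_
    rintro x ⟨F, hF, rfl⟩
    exact hlowC F hF
  · rw [hpess]
    have hd : 0 < (s' : ℝ) - S.min' hS := by linarith
    refine le_of_forall_pos_le_add fun δ hδ => ?_
    set ε : ℝ := min β (δ / ((s' : ℝ) - S.min' hS)) with hε
    have hε0 : 0 < ε := lt_min hβpos (div_pos hδ hd)
    have hεβ : ε ≤ β := min_le_left _ _
    have h1 : sInf (distMean S '' likelySorted S n A α) ≤ distMean S (Fe ε) :=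
      csInf_le hbdd ⟨Fe ε, hFe_memL ε hε0 hεβ, rfl⟩
    rw [hFe_mean] at h1
    have h2 : ε * ((s' : ℝ) - S.min' hS) ≤ δ := by
      have h3 : ε ≤ δ / ((s' : ℝ) - S.min' hS) := min_le_right _ _
      calc ε * ((s' : ℝ) - S.min' hS)
          ≤ (δ / ((s' : ℝ) - S.min' hS)) * ((s' : ℝ) - S.min' hS) :=
            mul_le_mul_of_nonneg_right h3 hd.le
        _ = δ := div_mul_cancel₀ δ (ne_of_gt hd)
    linarith

end
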